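/- A finite-dimensional pivotal Hopf algebra (H, g) is unibalanced (its symmetrised right integral μ_g := μ(g·−) is also a symmetrised left integral, i.e. satisfies (g^{-1} ⊗ μ_g)Δ(x) = μ_g(x)·1 for all x) if and only if the comodulus a equals g². -/
import Mathlib


open TensorProduct

lemma aux_left (k H : Type) [Field k] [Ring H] [HopfAlgebra k H]
    (μ : H →ₗ[k] k) (g : H) (S : H ⊗[k] H) :
    TensorProduct.rid k H (LinearMap.lTensor H μ ((g ⊗ₜ[k] (1 : H)) * S)) =
      g * TensorProduct.rid k H (LinearMap.lTensor H μ S) := by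
  induction S using TensorProduct.induction_on with
  | zero => simp
  | tmul u v => simp [Algebra.TensorProduct.tmul_mul_tmul, mul_smul_comm]
  | add S T hS hT => simp [mul_add, hS, hT]

lemma aux_right (k H : Type) [Field k] [Ring H] [HopfAlgebra k H]
    (μ : H →ₗ[k] k) (g : H) (S : H ⊗[k] H) :
    TensorProduct.rid k H (LinearMap.lTensor H μ (((1 : H) ⊗ₜ[k] g) * S)) =
      TensorProduct.rid k H (LinearMap.lTensor H (μ ∘ₗ LinearMap.mulLeft k g) S) := by
  induction S using TensorProduct.induction_on with
  | zero => simp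
  | tmul u v => simp [Algebra.TensorProduct.tmul_mul_tmul]
  | add S T hS hT => simp [mul_add, hS, hT]

/-- Lemma 4.8: a finite-dimensional pivotal Hopf algebra `(H, g)` is unibalanced, i.e. the
symmetrised right integral `μ_g = μ(g ·)` satisfies the defining relation of a symmetrised
left integral `(g⁻¹ ⊗ μ_g)Δ(x) = μ_g(x)·1`, if and only if the comodulus `a` equals `g²`. -/
theorem stmt12 (k H : Type) [Field k] [Ring H] [HopfAlgebra k H] [FiniteDimensional k H]
    (μ : H →ₗ[k] k) (hμ0 : μ ≠ 0)
    (hμ : ∀ x : H,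
      TensorProduct.lid k H (LinearMap.rTensor H μ (Coalgebra.comul x)) = μ x • (1 : H))
    (a : H)
    (ha : ∀ x : H,
      TensorProduct.rid k H (LinearMap.lTensor H μ (Coalgebra.comul x)) = μ x • a)
    (g gi : H) (hggi : g * gi = 1) (hgig : gi * g = 1)
    (hgrp : Coalgebra.comul (R := k) g = g ⊗ₜ[k] g)
    (hpiv : ∀ x : H,
      HopfAlgebra.antipode (R := k) (HopfAlgebra.antipode (R := k) x) = g * x * gi) :
    (∀ x : H,
        gi * (TensorProduct.rid k H
            (LinearMap.lTensor H (μ ∘ₗ LinearMap.mulLeft k g) (Coalgebra.comul x))) =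
          μ (g * x) • (1 : H)) ↔ a = g * g := by
  -- key computation: f'(comul x) = μ(g x) • (gi * a)
  have key : ∀ x : H,
      TensorProduct.rid k H
          (LinearMap.lTensor H (μ ∘ₗ LinearMap.mulLeft k g) (Coalgebra.comul x)) =
        μ (g * x) • (gi * a) := by
    intro x
    have h1 : Coalgebra.comul (R := k) (g * x)
        = (g ⊗ₜ[k] (1 : H)) * (((1 : H) ⊗ₜ[k] g) * Coalgebra.comul x) := by
      rw [Bialgebra.comul_mul, hgrp, ← mul_assoc,
        Algebra.TensorProduct.tmul_mul_tmul, mul_one, one_mul]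
    have h2 := ha (g * x)
    rw [h1, aux_left, aux_right] at h2
    have := congrArg (fun y => gi * y) h2
    simp only [← mul_assoc, hgig, one_mul, mul_smul_comm] at this
    exact this
  constructor
  · intro hcond
    -- pick y with μ y ≠ 0, set x = gi * y
    obtain ⟨y, hy⟩ : ∃ y, μ y ≠ 0 := by
      by_contra h
      push_neg at h
      exact hμ0 (LinearMap.ext fun y => h y)
    have hx := hcond (gi * y)
    rw [key] at hx
    rw [← mul_assoc, hggi, one_mul] at hx
    have hx' : μ y • (gi * (gi * a)) = μ y • (1 : H) := by
      rw [← hx, mul_smul_comm]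
    have h1 : gi * (gi * a) = 1 := by
      have := congrArg (fun z => (μ y)⁻¹ • z) hx'
      simpa [smul_smul, inv_mul_cancel₀ hy] using this
    calc a = g * (g * (gi * (gi * a))) := by
          rw [← mul_assoc g gi, hggi, one_mul, ← mul_assoc, hggi, one_mul]
    _ = g * g := by rw [h1, mul_one]
  · intro haeq x
    rw [key, mul_smul_comm, haeq, ← mul_assoc gi g g, hgig, one_mul, hgig]
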